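/- Let N ≥ 1 and m ≥ 1 be integers and let G₁,…,G_m ∈ ℂ[x₀,…,x_N] be homogeneous polynomials with G_i of degree d_i ≥ 1. If 2·(d₁+⋯+d_m) ≤ N + m, then any two points of the common projective zero locus X of G₁,…,G_m are joined by a chain of two lines contained in X: for any nonzero v, w ∈ ℂ^{N+1} with G_i(v) = G_i(w) = 0 for all i, there exists a nonzero vector p ∈ ℂ^{N+1} such that G_i(a·v + b·p) = 0 and G_i(a·p + b·w) = 0 for every i = 1,…,m and all a, b ∈ ℂ. -/

import Mathlib

open MvPolynomial Finset

namespace ConicAux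


variable {n : ℕ}

-- L0: scaling
lemma eval_smul_of_isHomogeneous {φ : MvPolynomial (Fin n) ℂ} {e : ℕ}
    (hφ : φ.IsHomogeneous e) (c : ℂ) (x : Fin n → ℂ) :
    MvPolynomial.eval (c • x) φ = c ^ e * MvPolynomial.eval x φ := by
  conv_lhs => rw [φ.as_sum]
  conv_rhs => rw [φ.as_sum]
  rw [map_sum, map_sum, Finset.mul_sum]
  refine Finset.sum_congr rfl fun u hu => ?_
  have hdeg : u.degree = e := by
    by_contra h
    exact (MvPolynomial.mem_support_iff.mp hu) (hφ.coeff_eq_zero h)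
  rw [eval_monomial, eval_monomial]
  have : (u.prod fun j k => (c • x) j ^ k) = c ^ e * u.prod fun j k => x j ^ k := by
    rw [Finsupp.prod, Finsupp.prod]
    have : ∀ j ∈ u.support, ((c • x) j) ^ u j = c ^ u j * (x j) ^ u j := by
      intro j _; rw [Pi.smul_apply, smul_eq_mul, mul_pow]
    rw [Finset.prod_congr rfl this, Finset.prod_mul_distrib, Finset.prod_pow_eq_pow_sum]
    rw [← hdeg]; rfl
  rw [this]; ring




variable {n : ℕ}

-- L1
lemma homogeneousComponent_mul_right {g F : MvPolynomial (Fin n) ℂ} {e t : ℕ}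
    (hF : F.IsHomogeneous e) (het : e ≤ t) :
    homogeneousComponent t (g * F) = homogeneousComponent (t - e) g * F := by
  set D := g.totalDegree with hD
  have hsum := g.sum_homogeneousComponent
  calc homogeneousComponent t (g * F)
      = ∑ k ∈ range (D + 1), homogeneousComponent t (homogeneousComponent k g * F) := by
        conv_lhs => rw [← hsum, Finset.sum_mul, map_sum]
    _ = ∑ k ∈ range (D + 1), if t = k + e then homogeneousComponent k g * F else 0 := by
        refine Finset.sum_congr rfl fun k _ => ?_
        exact homogeneousComponent_of_mem
          ((mem_homogeneousSubmodule _ _).mpr ((homogeneousComponent_isHomogeneous k g).mul hF))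
    _ = homogeneousComponent (t - e) g * F := by
        by_cases h : t - e ≤ D
        · rw [Finset.sum_eq_single (t - e)]
          · simp [Nat.sub_add_cancel het]
          · intro k _ hk
            rw [if_neg]; omega
          · intro hmem
            exact absurd (Finset.mem_range.mpr (by omega)) hmem
        · rw [Finset.sum_eq_zero, homogeneousComponent_eq_zero _ g (by omega),
            zero_mul]
          intro k hk
          rw [if_neg]
          have := Finset.mem_range.mp hk
          omega

-- L5
lemma homogeneousComponent_mul_top {A B : MvPolynomial (Fin n) ℂ} {a b : ℕ}
    (hA : A.totalDegree ≤ a) (hB : B.totalDegree ≤ b) :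
    homogeneousComponent (a + b) (A * B) =
      homogeneousComponent a A * homogeneousComponent b B := by
  set D := B.totalDegree with hD
  have hsum := B.sum_homogeneousComponent
  calc homogeneousComponent (a + b) (A * B)
      = ∑ l ∈ range (D + 1), homogeneousComponent (a + b) (A * homogeneousComponent l B) := by
        conv_lhs => rw [← hsum, Finset.mul_sum, map_sum]
    _ = ∑ l ∈ range (D + 1),
          homogeneousComponent (a + b - l) A * homogeneousComponent l B := by
        refine Finset.sum_congr rfl fun l hl => ?_
        exact homogeneousComponent_mul_right (homogeneousComponent_isHomogeneous l B)
          (by have := Finset.mem_range.mp hl; omega)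
    _ = homogeneousComponent a A * homogeneousComponent b B := by
        by_cases h : b ≤ D
        · rw [Finset.sum_eq_single b]
          · rw [Nat.add_sub_cancel]
          · intro l hl hne
            have hlD := Finset.mem_range.mp hl
            rcases lt_or_gt_of_ne hne with hlt | hgt
            · rw [homogeneousComponent_eq_zero _ A (lt_of_le_of_lt hA (by omega)), zero_mul]
            · omega
          · intro hmem; exact absurd (Finset.mem_range.mpr (by omega)) hmem
        · rw [Finset.sum_eq_zero, homogeneousComponent_eq_zero _ B (by omega),
            mul_zero]
          intro l hl
          have hlD := Finset.mem_range.mp hl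
          rw [homogeneousComponent_eq_zero _ A (lt_of_le_of_lt hA (by omega)), zero_mul]


lemma exists_common_zero {n : ℕ} {ι : Type} [Fintype ι]
    (hcard : Fintype.card ι < n)
    (e : ι → ℕ) (he : ∀ i, 1 ≤ e i)
    (F : ι → MvPolynomial (Fin n) ℂ) (hF : ∀ i, (F i).IsHomogeneous (e i)) :
    ∃ x : Fin n → ℂ, x ≠ 0 ∧ ∀ i, MvPolynomial.eval x (F i) = 0 := by
  classical
  have hn : 1 ≤ n := by omega
  by_contra hcon
  push_neg at hcon
  set I : Ideal (MvPolynomial (Fin n) ℂ) := Ideal.span (Set.range F) with hI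
  have hXrad : ∀ j : Fin n, X j ∈ I.radical := by
    intro j
    have h1 : MvPolynomial.zeroLocus ℂ I ⊆ {0} := by
      intro x hx
      by_contra hx0
      obtain ⟨i, hi⟩ := hcon x hx0
      exact hi (hx (F i) (Ideal.subset_span ⟨i, rfl⟩))
    rw [← MvPolynomial.vanishingIdeal_zeroLocus_eq_radical (K := ℂ)]
    rw [MvPolynomial.mem_vanishingIdeal_iff]
    intro x hx
    have hx0 : x = 0 := h1 hx
    subst hx0
    simp
  choose k hk using fun j => hXrad j
  set K0 : ℕ := 1 + Finset.univ.sup k with hK0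
  have hXK0 : ∀ j : Fin n, (X j : MvPolynomial (Fin n) ℂ) ^ K0 ∈ I := by
    intro j
    have hkj : k j ≤ K0 := by
      have := Finset.le_sup (f := k) (Finset.mem_univ j)
      omega
    have heq : (X j : MvPolynomial (Fin n) ℂ) ^ K0
        = X j ^ (K0 - k j) * X j ^ (k j) := (pow_sub_mul_pow _ hkj).symm
    rw [heq]
    exact I.mul_mem_left _ (hk j)
  set K : ℕ := n * K0 + Finset.univ.sup e + 1 with hKdef
  have hK1 : 1 ≤ K := by omega
  have heK : ∀ i, e i ≤ K := by
    intro i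
    have := Finset.le_sup (f := e) (Finset.mem_univ i)
    omega
  -- monomials of high degree are in I
  have hmonoI : ∀ (u : Fin n →₀ ℕ) (a : ℂ), n * K0 ≤ u.degree → monomial u a ∈ I := by
    intro u a hu
    have hj : ∃ j, K0 ≤ u j := by
      by_contra hj
      push_neg at hj
      have : u.degree ≤ ∑ j : Fin n, u j := by
        rw [Finsupp.degree]
        exact Finset.sum_le_sum_of_subset (Finset.subset_univ _)
      have h2 : ∑ j : Fin n, u j ≤ ∑ _j : Fin n, (K0 - 1) :=
        Finset.sum_le_sum fun j _ => by have := hj j; omega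
      simp only [Finset.sum_const, Finset.card_univ, Fintype.card_fin, smul_eq_mul] at h2
      have : n * (K0 - 1) < n * K0 := by
        have hK01 : K0 - 1 < K0 := by omega
        calc n * (K0 - 1) < n * (K0 - 1) + n := by omega
          _ ≤ n * K0 := by nlinarith
      omega
    obtain ⟨j, hj⟩ := hj
    have hle : Finsupp.single j K0 ≤ u := by
      rw [Finsupp.single_le_iff]; exact hj
    have : monomial u a = monomial (u - Finsupp.single j K0) a * (X j) ^ K0 := by
      rw [X_pow_eq_monomial, monomial_mul, mul_one, tsub_add_cancel_of_le hle]
    rw [this]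
    exact I.mul_mem_left _ (hXK0 j)
  -- homogeneous elements of high degree are in I
  have hhomI : ∀ (t : ℕ) (p : MvPolynomial (Fin n) ℂ), p.IsHomogeneous t → K ≤ t → p ∈ I := by
    intro t p hp ht
    rw [p.as_sum]
    refine Ideal.sum_mem _ fun u hu => ?_
    have hdeg : u.degree = t := by
      by_contra h
      exact (MvPolynomial.mem_support_iff.mp hu) (hp.coeff_eq_zero h)
    exact hmonoI u _ (by omega)
  -- the spanning claim
  have claim : ∀ (t : ℕ) (p : MvPolynomial (Fin n) ℂ), p.IsHomogeneous t →
      p ∈ Submodule.span ℂ {q | ∃ (α : ι → ℕ) (u : Fin n →₀ ℕ),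
        q = (∏ i, F i ^ α i) * monomial u 1 ∧ (∑ i, α i * e i) + u.degree = t ∧
          u.degree < K} := by
    intro t
    induction t using Nat.strong_induction_on with
    | _ t IH =>
      intro p hp
      by_cases ht : t < K
      · -- low degree: p is a combination of its monomials
        rw [p.as_sum]
        refine Submodule.sum_mem _ fun u hu => ?_
        have hdeg : u.degree = t := by
          by_contra h
          exact (MvPolynomial.mem_support_iff.mp hu) (hp.coeff_eq_zero h)
        have heq : (monomial u (coeff u p) : MvPolynomial (Fin n) ℂ)
            = (coeff u p) • ((∏ i, F i ^ (0 : ℕ)) * monomial u 1) := by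
          simp [smul_monomial]
        rw [heq]
        refine Submodule.smul_mem _ _ (Submodule.subset_span ?_)
        exact ⟨fun _ => 0, u, by simp, by simp [hdeg], by omega⟩
      · push_neg at ht
        have hpI : p ∈ I := hhomI t p hp ht
        obtain ⟨c, hc⟩ := Finsupp.mem_ideal_span_range_iff_exists_finsupp.mp hpI
        have hdecomp : p = ∑ i ∈ c.support,
            homogeneousComponent (t - e i) (c i) * F i := by
          have hcomp : homogeneousComponent t p = p := by
            rw [homogeneousComponent_of_mem ((mem_homogeneousSubmodule _ _).mpr hp)]
            simp
          conv_lhs => rw [← hcomp, ← hc]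
          rw [Finsupp.sum, map_sum]
          refine Finset.sum_congr rfl fun i _ => ?_
          exact homogeneousComponent_mul_right (hF i) (le_trans (heK i) ht)
        rw [hdecomp]
        refine Submodule.sum_mem _ fun i _ => ?_
        have hti : t - e i < t := by
          have := he i
          have := heK i
          omega
        have hq := IH (t - e i) hti _ (homogeneousComponent_isHomogeneous (t - e i) (c i))
        have hmem : homogeneousComponent (t - e i) (c i) * F i ∈
            Submodule.map (LinearMap.mulRight ℂ (F i))
              (Submodule.span ℂ {q | ∃ (α : ι → ℕ) (u : Fin n →₀ ℕ),
                q = (∏ i, F i ^ α i) * monomial u 1 ∧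
                  (∑ i, α i * e i) + u.degree = t - e i ∧ u.degree < K}) :=
          Submodule.mem_map_of_mem hq
        rw [Submodule.map_span] at hmem
        refine Submodule.span_le.mpr ?_ hmem
        rintro q ⟨q', ⟨α, u, rfl, hsum, huK⟩, rfl⟩
        refine Submodule.subset_span
          ⟨(fun j => α j + (if j = i then 1 else 0)), u, ?_, ?_, huK⟩
        · simp only [LinearMap.mulRight_apply]
          have hprod : (∏ j, F j ^ (α j + (if j = i then 1 else 0)))
              = (∏ j, F j ^ α j) * F i := by
            have : ∀ j ∈ Finset.univ, F j ^ (α j + (if j = i then 1 else 0))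
                = F j ^ α j * F j ^ (if j = i then 1 else 0) := fun j _ => pow_add _ _ _
            rw [Finset.prod_congr rfl this, Finset.prod_mul_distrib]
            congr 1
            rw [Finset.prod_eq_single i (fun j _ hj => by simp [hj]) (by simp)]
            simp
          rw [hprod]; ring
        · have hsum2 : (∑ j, (α j + (if j = i then 1 else 0)) * e j)
              = (∑ j, α j * e j) + e i := by
            have : ∀ j ∈ Finset.univ, (α j + (if j = i then 1 else 0)) * e j
                = α j * e j + (if j = i then e j else 0) := by
              intro j _
              by_cases hj : j = i <;> simp [hj, add_mul]
            rw [Finset.sum_congr rfl this, Finset.sum_add_distrib]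
            congr 1
            rw [Finset.sum_ite_eq' Finset.univ i e]
            simp
          rw [hsum2]
          have hei := heK i
          omega
  -- counting
  set r := Fintype.card ι with hr
  set s := n ^ n * K ^ n with hs
  set T := n * s with hT
  let ψ : (ι → Fin (T+1)) × (Fin n → Fin K) → MvPolynomial (Fin n) ℂ :=
    fun z => (∏ i, F i ^ (z.1 i : ℕ)) *
      monomial (Finsupp.equivFunOnFinite.symm fun j => (z.2 j : ℕ)) 1
  let E : Finset (MvPolynomial (Fin n) ℂ) := Finset.image ψ Finset.univ
  let μ : (Fin n → Fin (s+1)) → MvPolynomial (Fin n) ℂ :=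
    fun c => monomial (Finsupp.equivFunOnFinite.symm fun j => (c j : ℕ)) 1
  have hμli : LinearIndependent ℂ μ := by
    have hbasis := (MvPolynomial.basisMonomials (Fin n) ℂ).linearIndependent
    have hinj : Function.Injective
        (fun c : Fin n → Fin (s+1) =>
          (Finsupp.equivFunOnFinite.symm fun j => ((c j : ℕ)))) := by
      intro c1 c2 h
      have h2 : (fun j => ((c1 j : ℕ))) = fun j => ((c2 j : ℕ)) :=
        Finsupp.equivFunOnFinite.symm.injective h
      funext j
      exact Fin.val_injective (congrFun h2 j)
    have heq : μ = ⇑(MvPolynomial.basisMonomials (Fin n) ℂ) ∘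
        (fun c : Fin n → Fin (s+1) =>
          (Finsupp.equivFunOnFinite.symm fun j => ((c j : ℕ)))) := by
      funext c
      simp [μ, MvPolynomial.coe_basisMonomials]
    rw [heq]
    exact hbasis.comp _ hinj
  have hrange : Set.range μ ≤ Submodule.span ℂ (↑E : Set (MvPolynomial (Fin n) ℂ)) := by
    rintro q ⟨c, rfl⟩
    set u := (Finsupp.equivFunOnFinite.symm fun j => ((c j : ℕ))) with hu
    have hujs : ∀ j, u j ≤ s := by
      intro j
      have : u j = (c j : ℕ) := by rw [hu]; rfl
      rw [this]
      exact Nat.lt_succ_iff.mp (c j).isLt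
    have hdegu : u.degree ≤ T := by
      have h1 : u.degree ≤ ∑ j : Fin n, u j := by
        rw [Finsupp.degree]
        exact Finset.sum_le_sum_of_subset (Finset.subset_univ _)
      have h2 : ∑ j : Fin n, u j ≤ ∑ _j : Fin n, s :=
        Finset.sum_le_sum fun j _ => hujs j
      simp only [Finset.sum_const, Finset.card_univ, Fintype.card_fin, smul_eq_mul] at h2
      omega
    have hmono : (monomial u 1 : MvPolynomial (Fin n) ℂ).IsHomogeneous u.degree :=
      isHomogeneous_monomial _ rfl
    have hspan := claim u.degree _ hmono
    have hsub : {q | ∃ (α : ι → ℕ) (u' : Fin n →₀ ℕ),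
        q = (∏ i, F i ^ α i) * monomial u' 1 ∧ (∑ i, α i * e i) + u'.degree = u.degree ∧
          u'.degree < K} ⊆ (↑E : Set (MvPolynomial (Fin n) ℂ)) := by
      rintro q' ⟨α, u', rfl, hsumEq, hu'K⟩
      have hαle : ∀ i, α i < T + 1 := by
        intro i
        have h1 : α i ≤ α i * e i := Nat.le_mul_of_pos_right _ (he i)
        have h2 : α i * e i ≤ ∑ i', α i' * e i' :=
          Finset.single_le_sum (f := fun i' => α i' * e i')
            (fun i' _ => Nat.zero_le _) (Finset.mem_univ i)
        omega
      have hu'lt : ∀ j, u' j < K := fun j => lt_of_le_of_lt (Finsupp.le_degree j u') hu'K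
      refine Finset.mem_coe.mpr (Finset.mem_image.mpr
        ⟨(fun i => ⟨α i, hαle i⟩, fun j => ⟨u' j, hu'lt j⟩), Finset.mem_univ _, ?_⟩)
      show (∏ i, F i ^ α i) * monomial (Finsupp.equivFunOnFinite.symm fun j => u' j) 1 = _
      rw [show (fun j => u' j) = ⇑u' from rfl, Finsupp.equivFunOnFinite_symm_coe]
    exact (Submodule.span_mono hsub) hspan
  have hle := linearIndependent_le_span' μ hμli (↑E) hrange
  have h1 : (s+1)^n ≤ E.card := by
    have hcoe : Fintype.card ↑(↑E : Set (MvPolynomial (Fin n) ℂ)) = E.card := by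
      simp [Finset.coe_sort_coe]
    rw [Cardinal.mk_fintype, Fintype.card_fun, Fintype.card_fin, Fintype.card_fin, hcoe] at hle
    exact_mod_cast hle
  have h2 : E.card ≤ (T+1)^r * K^n := by
    have h3 : E.card ≤ Fintype.card ((ι → Fin (T+1)) × (Fin n → Fin K)) := by
      calc E.card ≤ Finset.univ.card := Finset.card_image_le
        _ = Fintype.card ((ι → Fin (T+1)) × (Fin n → Fin K)) := Finset.card_univ
    simp only [Fintype.card_prod, Fintype.card_fun, Fintype.card_fin] at h3
    rw [hr]
    exact h3
  have hfinal : (s+1)^n ≤ (T+1)^r * K^n := h1.trans h2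
  have hTb : T + 1 ≤ n * (s+1) := by
    rw [Nat.mul_succ]
    omega
  have h3 : (T+1)^r ≤ (n*(s+1))^r := Nat.pow_le_pow_left hTb r
  have h5 : n^r ≤ n^n := Nat.pow_le_pow_right hn (by omega)
  have h6 : (s+1)^r ≤ (s+1)^(n-1) := Nat.pow_le_pow_right (by omega) (by omega)
  have h7 : (s+1)^n = (s+1)^(n-1) * (s+1) := by
    rw [← pow_succ]
    congr 1
    omega
  have hP : 0 < (s+1)^(n-1) := pow_pos (by omega) _
  have hchain : (s+1)^(n-1) * (s+1) ≤ (s+1)^(n-1) * s := by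
    calc (s+1)^(n-1) * (s+1) = (s+1)^n := h7.symm
      _ ≤ (T+1)^r * K^n := hfinal
      _ ≤ (n*(s+1))^r * K^n := Nat.mul_le_mul_right _ h3
      _ = n^r * (s+1)^r * K^n := by rw [mul_pow]
      _ ≤ n^n * (s+1)^(n-1) * K^n := Nat.mul_le_mul_right _ (Nat.mul_le_mul h5 h6)
      _ = (s+1)^(n-1) * (n^n * K^n) := by ring
      _ = (s+1)^(n-1) * s := by rw [← hs]
  have hcontra := Nat.le_of_mul_le_mul_left hchain hP
  omega



variable {n : ℕ}

-- shift evaluation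
lemma eval_shift (φ : MvPolynomial (Fin n) ℂ) (v p : Fin n → ℂ) :
    MvPolynomial.eval p (MvPolynomial.aeval (fun j => X j + C (v j)) φ)
      = MvPolynomial.eval (fun j => p j + v j) φ := by
  induction φ using MvPolynomial.induction_on with
  | C a => simp
  | add q q' hq hq' => simp only [map_add, hq, hq']
  | mul_X q j hq => simp only [map_mul, hq, aeval_X, map_add, eval_X, eval_C]

-- total degree of the shift
lemma totalDegree_shift_le {φ : MvPolynomial (Fin n) ℂ} {e : ℕ}
    (hφ : φ.IsHomogeneous e) (v : Fin n → ℂ) :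
    (MvPolynomial.aeval (fun j => X j + C (v j)) φ).totalDegree ≤ e := by
  conv_lhs => rw [φ.as_sum]
  rw [map_sum]
  refine (totalDegree_finset_sum _ _).trans ?_
  refine Finset.sup_le fun u hu => ?_
  have hdeg : u.degree = e := by
    by_contra h
    exact (MvPolynomial.mem_support_iff.mp hu) (hφ.coeff_eq_zero h)
  rw [aeval_monomial]
  refine (totalDegree_mul _ _).trans ?_
  have h1 : (algebraMap ℂ (MvPolynomial (Fin n) ℂ) (coeff u φ)).totalDegree = 0 := by
    rw [MvPolynomial.algebraMap_eq, totalDegree_C]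
  rw [h1, zero_add]
  refine le_trans ?_ (le_of_eq hdeg)
  rw [Finsupp.prod, Finsupp.degree]
  refine (totalDegree_finset_prod _ _).trans ?_
  refine Finset.sum_le_sum fun j _ => ?_
  refine (totalDegree_pow _ _).trans ?_
  have : (X j + C (v j) : MvPolynomial (Fin n) ℂ).totalDegree ≤ 1 := by
    refine (totalDegree_add _ _).trans ?_
    simp [totalDegree_X, totalDegree_C]
  calc u j * (X j + C (v j) : MvPolynomial (Fin n) ℂ).totalDegree ≤ u j * 1 :=
        Nat.mul_le_mul_left _ this
    _ = u j := Nat.mul_one _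

-- top component of products with bounded degrees
lemma homogeneousComponent_finset_prod {β : Type*} (s : Finset β)
    (A : β → MvPolynomial (Fin n) ℂ) (a : β → ℕ)
    (h : ∀ b ∈ s, (A b).totalDegree ≤ a b) :
    homogeneousComponent (∑ b ∈ s, a b) (∏ b ∈ s, A b)
      = ∏ b ∈ s, homogeneousComponent (a b) (A b) := by
  classical
  induction s using Finset.induction_on with
  | empty =>
      simp only [Finset.sum_empty, Finset.prod_empty]
      rw [homogeneousComponent_of_mem ((mem_homogeneousSubmodule _ _).mpr (isHomogeneous_one _ _))]
      simp
  | insert x t hb IH =>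
      rw [Finset.sum_insert hb, Finset.prod_insert hb, Finset.prod_insert hb]
      rw [homogeneousComponent_mul_top (h x (Finset.mem_insert_self _ _))
        ((totalDegree_finset_prod _ _).trans
          (Finset.sum_le_sum fun b hbt => h b (Finset.mem_insert_of_mem hbt)))]
      rw [IH fun b hbt => h b (Finset.mem_insert_of_mem hbt)]

-- component 1 of X + C
lemma homogeneousComponent_one_X_add_C (j : Fin n) (c : ℂ) :
    homogeneousComponent 1 (X j + C c : MvPolynomial (Fin n) ℂ) = X j := by
  rw [map_add]
  rw [homogeneousComponent_of_mem ((mem_homogeneousSubmodule _ _).mpr (isHomogeneous_X _ _))]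
  rw [homogeneousComponent_of_mem ((mem_homogeneousSubmodule _ _).mpr (isHomogeneous_C _ _))]
  simp

-- top component of the shift is the original polynomial
lemma homogeneousComponent_shift_top {φ : MvPolynomial (Fin n) ℂ} {e : ℕ}
    (hφ : φ.IsHomogeneous e) (v : Fin n → ℂ) :
    homogeneousComponent e (MvPolynomial.aeval (fun j => X j + C (v j)) φ) = φ := by
  conv_lhs => rw [φ.as_sum]
  rw [map_sum, map_sum]
  conv_rhs => rw [φ.as_sum]
  refine Finset.sum_congr rfl fun u hu => ?_
  have hdeg : u.degree = e := by
    by_contra h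
    exact (MvPolynomial.mem_support_iff.mp hu) (hφ.coeff_eq_zero h)
  rw [aeval_monomial, MvPolynomial.algebraMap_eq, homogeneousComponent_C_mul]
  rw [Finsupp.prod, ← hdeg, Finsupp.degree_apply]
  rw [homogeneousComponent_finset_prod u.support _ (fun j => u j)
    (fun j _ => (totalDegree_pow _ _).trans (by
      have : (X j + C (v j) : MvPolynomial (Fin n) ℂ).totalDegree ≤ 1 := by
        refine (totalDegree_add _ _).trans ?_
        simp [totalDegree_X, totalDegree_C]
      calc u j * (X j + C (v j) : MvPolynomial (Fin n) ℂ).totalDegree ≤ u j * 1 :=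
            Nat.mul_le_mul_left _ this
        _ = u j := Nat.mul_one _))]
  have hXpow : ∀ j ∈ u.support,
      homogeneousComponent (u j) ((X j + C (v j) : MvPolynomial (Fin n) ℂ) ^ (u j))
        = X j ^ (u j) := by
    intro j _
    induction u j with
    | zero =>
        rw [pow_zero, pow_zero]
        rw [homogeneousComponent_of_mem ((mem_homogeneousSubmodule _ _).mpr (isHomogeneous_one _ _))]
        simp
    | succ k IHk =>
        rw [pow_succ, pow_succ]
        rw [homogeneousComponent_mul_top
          ((totalDegree_pow _ _).trans (by
            have : (X j + C (v j) : MvPolynomial (Fin n) ℂ).totalDegree ≤ 1 := by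
              refine (totalDegree_add _ _).trans ?_
              simp [totalDegree_X, totalDegree_C]
            calc k * (X j + C (v j) : MvPolynomial (Fin n) ℂ).totalDegree ≤ k * 1 :=
                  Nat.mul_le_mul_left _ this
              _ = k := Nat.mul_one _))
          (by
            refine (totalDegree_add _ _).trans ?_
            simp [totalDegree_X, totalDegree_C])]
        rw [IHk, homogeneousComponent_one_X_add_C]
  rw [Finset.prod_congr rfl hXpow]
  rw [monomial_eq, Finsupp.prod]

-- sum of components up to a degree bound
lemma sum_components_of_totalDegree_le {ψ : MvPolynomial (Fin n) ℂ} {e : ℕ}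
    (h : ψ.totalDegree ≤ e) :
    ∑ k ∈ range (e + 1), homogeneousComponent k ψ = ψ := by
  calc ∑ k ∈ range (e + 1), homogeneousComponent k ψ
      = ∑ k ∈ range (ψ.totalDegree + 1), homogeneousComponent k ψ := by
        symm
        apply Finset.sum_subset (Finset.range_subset_range.mpr (by omega))
        intro k _ hk
        have : ψ.totalDegree < k := by
          have := Finset.mem_range.not.mp hk
          omega
        exact homogeneousComponent_eq_zero _ ψ this
    _ = ψ := ψ.sum_homogeneousComponent



variable {n : ℕ}

/-- If `G` vanishes at `v`, at `p`, and all the intermediate pencil constraints vanish at `p`,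
then `G` vanishes on the whole line spanned by `v` and `p`. -/
lemma line_in_zero_locus {G : MvPolynomial (Fin n) ℂ} {e : ℕ}
    (hG : G.IsHomogeneous e) (v p : Fin n → ℂ)
    (hv : MvPolynomial.eval v G = 0) (hp : MvPolynomial.eval p G = 0)
    (hmid : ∀ k, 1 ≤ k → k ≤ e - 1 →
      MvPolynomial.eval p
        (homogeneousComponent k (MvPolynomial.aeval (fun j => X j + C (v j)) G)) = 0)
    (a b : ℂ) :
    MvPolynomial.eval (a • v + b • p) G = 0 := by
  have key : ∀ c : ℂ, MvPolynomial.eval (v + c • p) G = 0 := by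
    intro c
    set ψ := MvPolynomial.aeval (fun j => X j + C (v j)) G with hψ
    have h1 : MvPolynomial.eval (v + c • p) G = MvPolynomial.eval (c • p) ψ := by
      have harg : (fun j => (c • p) j + v j) = v + c • p := by
        funext j
        simp [add_comm]
      rw [hψ, eval_shift, harg]
    rw [h1]
    have hdec := sum_components_of_totalDegree_le (e := e) (totalDegree_shift_le hG v)
    rw [← hψ] at hdec
    conv_lhs => rw [← hdec]
    rw [map_sum]
    refine Finset.sum_eq_zero fun k hk => ?_
    rw [eval_smul_of_isHomogeneous (homogeneousComponent_isHomogeneous k ψ)]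
    have hk' : k ≤ e := by have := Finset.mem_range.mp hk; omega
    rcases Nat.eq_zero_or_pos k with h0 | hpos
    · subst h0
      rw [homogeneousComponent_zero, eval_C]
      have hc0 : coeff 0 ψ = 0 := by
        have h2 : MvPolynomial.eval (0 : Fin n → ℂ) ψ = 0 := by
          have harg : (fun j => (0 : Fin n → ℂ) j + v j) = v := by
            funext j
            simp
          rw [hψ, eval_shift, harg, hv]
        rwa [eval_zero, constantCoeff_eq] at h2
      rw [hc0, mul_zero]
    · by_cases hke : k = e
      · subst hke
        rw [hψ, homogeneousComponent_shift_top hG, hp, mul_zero]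
      · rw [hmid k hpos (by omega), mul_zero]
  by_cases ha : a = 0
  · subst ha
    have h2 : (0 : ℂ) • v + b • p = b • p := by
      rw [zero_smul, zero_add]
    rw [h2, eval_smul_of_isHomogeneous hG, hp, mul_zero]
  · have h2 : a • v + b • p = a • (v + (a⁻¹ * b) • p) := by
      rw [smul_add, smul_smul, ← mul_assoc, mul_inv_cancel₀ ha, one_mul]
    rw [h2, eval_smul_of_isHomogeneous hG, key, mul_zero]


end ConicAux

open ConicAux MvPolynomial

/-- The case `l = 2`: if `2 * ∑ d i ≤ N + m` then any two points of the common zero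
locus are joined by a chain of two lines (a possibly degenerate conic) inside it. -/
theorem conic_connected_of_degree_bound
    (N m : ℕ) (hN : 1 ≤ N) (hm : 1 ≤ m)
    (d : Fin m → ℕ) (hd : ∀ i, 1 ≤ d i)
    (G : Fin m → MvPolynomial (Fin (N + 1)) ℂ)
    (hG : ∀ i, (G i).IsHomogeneous (d i))
    (hnum : 2 * (∑ i, d i) ≤ N + m)
    (v w : Fin (N + 1) → ℂ) (hv : v ≠ 0) (hw : w ≠ 0)
    (hGv : ∀ i, MvPolynomial.eval v (G i) = 0)
    (hGw : ∀ i, MvPolynomial.eval w (G i) = 0) :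
    ∃ p : Fin (N + 1) → ℂ, p ≠ 0 ∧
      ∀ (i : Fin m) (a b : ℂ),
        MvPolynomial.eval (a • v + b • p) (G i) = 0 ∧
        MvPolynomial.eval (a • p + b • w) (G i) = 0 := by
  classical
  let ι : Type := Σ i : Fin m, Option (Fin (d i - 1) ⊕ Fin (d i - 1))
  let P : ι → MvPolynomial (Fin (N + 1)) ℂ := fun z =>
    match z with
    | ⟨i, none⟩ => G i
    | ⟨i, some (Sum.inl k)⟩ =>
        homogeneousComponent ((k : ℕ) + 1) (MvPolynomial.aeval (fun j => X j + C (v j)) (G i))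
    | ⟨i, some (Sum.inr k)⟩ =>
        homogeneousComponent ((k : ℕ) + 1) (MvPolynomial.aeval (fun j => X j + C (w j)) (G i))
  let deg : ι → ℕ := fun z =>
    match z with
    | ⟨i, none⟩ => d i
    | ⟨_, some (Sum.inl k)⟩ => (k : ℕ) + 1
    | ⟨_, some (Sum.inr k)⟩ => (k : ℕ) + 1
  have hdeg1 : ∀ z, 1 ≤ deg z := by
    rintro ⟨i, (_ | (k | k))⟩
    · exact hd i
    · exact Nat.le_add_left 1 _
    · exact Nat.le_add_left 1 _
  have hPhom : ∀ z, (P z).IsHomogeneous (deg z) := by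
    rintro ⟨i, (_ | (k | k))⟩
    · exact hG i
    · exact homogeneousComponent_isHomogeneous _ _
    · exact homogeneousComponent_isHomogeneous _ _
  have hcard : Fintype.card ι < N + 1 := by
    have h1 : Fintype.card ι = ∑ i : Fin m, (d i - 1 + (d i - 1) + 1) := by
      simp [ι, Fintype.card_sigma, Fintype.card_option, Fintype.card_sum]
    have h2 : ∑ i : Fin m, (d i - 1 + (d i - 1) + 1) + m = 2 * ∑ i, d i := by
      have h3 : ∀ i ∈ Finset.univ, d i - 1 + (d i - 1) + 1 + 1 = 2 * d i := by
        intro i _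
        have := hd i
        omega
      calc ∑ i : Fin m, (d i - 1 + (d i - 1) + 1) + m
          = ∑ i : Fin m, (d i - 1 + (d i - 1) + 1 + 1) := by
            conv_rhs => rw [Finset.sum_add_distrib]
            simp [Finset.card_univ]
        _ = ∑ i : Fin m, 2 * d i := Finset.sum_congr rfl h3
        _ = 2 * ∑ i, d i := (Finset.mul_sum _ _ _).symm
    omega
  obtain ⟨p, hp0, hpz⟩ := exists_common_zero hcard deg hdeg1 P hPhom
  have hpG : ∀ i, MvPolynomial.eval p (G i) = 0 := fun i => hpz ⟨i, none⟩
  refine ⟨p, hp0, fun i a b => ⟨?_, ?_⟩⟩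
  · refine line_in_zero_locus (hG i) v p (hGv i) (hpG i) ?_ a b
    intro k hk1 hk2
    have := hpz ⟨i, some (Sum.inl ⟨k - 1, by omega⟩)⟩
    have hkk : (k - 1) + 1 = k := by omega
    simpa [P, hkk] using this
  · have hcomm : a • p + b • w = b • w + a • p := add_comm _ _
    rw [hcomm]
    refine line_in_zero_locus (hG i) w p (hGw i) (hpG i) ?_ b a
    intro k hk1 hk2
    have := hpz ⟨i, some (Sum.inr ⟨k - 1, by omega⟩)⟩
    have hkk : (k - 1) + 1 = k := by omega
    simpa [P, hkk] using this
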